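/- Let p ≥ 5 be prime. The sequence (f_λ)_{λ≥1} of numbers of free subgroups of index 6λ in PSL₂(ℤ), defined by f_0 = 1 and the coefficient recursion of (1 − 4z)F − 6z²F′ − zF² − 1 = 0, is ultimately periodic modulo p^α for every α ≥ 1. -/

import Mathlib

open PowerSeries Finset

noncomputable def kmw : ℕ → ℚ
  | 0 => 1
  | n + 1 => (6 * n + 1) * (6 * n + 5) / (6 * (n + 1)) * kmw n

def kmB (n : ℕ) : ℕ := (6 * n).choose (3 * n) * (3 * n).choose n * n.factorial

lemma kmB_spec (n : ℕ) : kmB n * ((3 * n).factorial * (2 * n).factorial)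
    = (6 * n).factorial := by
  have h1 : (3 * n).choose n * n.factorial * (2 * n).factorial = (3 * n).factorial := by
    have := Nat.choose_mul_factorial_mul_factorial (show n ≤ 3 * n by omega)
    rwa [show 3 * n - n = 2 * n by omega] at this
  have h2 : (6 * n).choose (3 * n) * (3 * n).factorial * (3 * n).factorial
      = (6 * n).factorial := by
    have := Nat.choose_mul_factorial_mul_factorial (show 3 * n ≤ 6 * n by omega)
    rwa [show 6 * n - 3 * n = 3 * n by omega] at this
  calc kmB n * ((3 * n).factorial * (2 * n).factorial)
      = (6 * n).choose (3 * n) * ((3 * n).choose n * n.factorial * (2 * n).factorial)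
        * (3 * n).factorial := by unfold kmB; ring
    _ = (6 * n).choose (3 * n) * (3 * n).factorial * (3 * n).factorial := by rw [h1]
    _ = (6 * n).factorial := h2

lemma kmB_rec (n : ℕ) : kmB (n + 1) * (n + 1) = 12 * (6 * n + 1) * (6 * n + 5) * kmB n := by
  have key : kmB (n + 1) * (n + 1) * ((3 * (n + 1)).factorial * (2 * (n + 1)).factorial)
      = 12 * (6 * n + 1) * (6 * n + 5) * kmB n
        * ((3 * (n + 1)).factorial * (2 * (n + 1)).factorial) := by
    have e3 : (3 * (n + 1)).factorial
        = (3 * n + 3) * ((3 * n + 2) * ((3 * n + 1) * (3 * n).factorial)) := by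
      rw [show 3 * (n + 1) = (3 * n + 2) + 1 by ring, Nat.factorial_succ,
        show 3 * n + 2 = (3 * n + 1) + 1 by ring, Nat.factorial_succ,
        show 3 * n + 1 = (3 * n) + 1 by ring, Nat.factorial_succ]
    have e2 : (2 * (n + 1)).factorial = (2 * n + 2) * ((2 * n + 1) * (2 * n).factorial) := by
      rw [show 2 * (n + 1) = (2 * n + 1) + 1 by ring, Nat.factorial_succ,
        show 2 * n + 1 = (2 * n) + 1 by ring, Nat.factorial_succ]
    have e6 : (6 * (n + 1)).factorial = (6 * n + 6) * ((6 * n + 5) * ((6 * n + 4) *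
        ((6 * n + 3) * ((6 * n + 2) * ((6 * n + 1) * (6 * n).factorial))))) := by
      rw [show 6 * (n + 1) = (6 * n + 5) + 1 by ring, Nat.factorial_succ,
        show 6 * n + 5 = (6 * n + 4) + 1 by ring, Nat.factorial_succ,
        show 6 * n + 4 = (6 * n + 3) + 1 by ring, Nat.factorial_succ,
        show 6 * n + 3 = (6 * n + 2) + 1 by ring, Nat.factorial_succ,
        show 6 * n + 2 = (6 * n + 1) + 1 by ring, Nat.factorial_succ,
        show 6 * n + 1 = (6 * n) + 1 by ring, Nat.factorial_succ]
    calc kmB (n + 1) * (n + 1) * ((3 * (n + 1)).factorial * (2 * (n + 1)).factorial)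
        = (n + 1) * (kmB (n + 1) * ((3 * (n + 1)).factorial * (2 * (n + 1)).factorial)) := by
          ring
      _ = (n + 1) * (6 * (n + 1)).factorial := by rw [kmB_spec]
      _ = 12 * (6 * n + 1) * (6 * n + 5)
            * ((kmB n * ((3 * n).factorial * (2 * n).factorial))
              * ((3*n+1)*(3*n+2)*(3*n+3)*(2*n+1)*(2*n+2))) := by
          rw [kmB_spec, e6]; ring
      _ = 12 * (6 * n + 1) * (6 * n + 5) * kmB n
            * ((3 * (n + 1)).factorial * (2 * (n + 1)).factorial) := by
          rw [e3, e2]; ring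
  have hpos : 0 < (3 * (n + 1)).factorial * (2 * (n + 1)).factorial :=
    Nat.mul_pos (Nat.factorial_pos _) (Nat.factorial_pos _)
  exact Nat.eq_of_mul_eq_mul_right hpos key

lemma kmw_rec (n : ℕ) : 6 * ((n : ℚ) + 1) * kmw (n + 1) = (6 * n + 1) * (6 * n + 5) * kmw n := by
  rw [kmw]
  have hn1 : (6 : ℚ) * ((n : ℚ) + 1) ≠ 0 := by positivity
  field_simp

lemma kmB_cast (n : ℕ) : (kmB n : ℚ) = kmw n * 72 ^ n := by
  induction n with
  | zero => simp [kmB, kmw]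
  | succ n ih =>
    have h := kmB_rec n
    have hq : (kmB (n + 1) : ℚ) * ((n : ℚ) + 1) = 12 * (6 * n + 1) * (6 * n + 5) * kmB n := by
      exact_mod_cast congrArg (Nat.cast : ℕ → ℚ) h
    rw [ih] at hq
    have h2 : (kmB (n + 1) : ℚ) * (6 * ((n : ℚ) + 1)) = (6 * n + 1) * (6 * n + 5) * kmw n * 72 ^ (n + 1) := by
      rw [pow_succ]; linear_combination 6 * hq
    have h3 := kmw_rec n
    have hn1 : (6 : ℚ) * ((n : ℚ) + 1) ≠ 0 := by positivity
    refine mul_left_cancel₀ hn1 ?_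
    linear_combination h2 - (72:ℚ) ^ (n+1) * h3

lemma pow_dvd_fact (p a : ℕ) (hp : 0 < p) : p ^ a ∣ (a * p).factorial := by
  induction a with
  | zero => simp
  | succ a ih =>
    obtain ⟨q, rfl⟩ : ∃ q, p = q + 1 := ⟨p - 1, by omega⟩
    have e : (a + 1) * (q + 1) = (a * (q + 1) + q) + 1 := by ring
    rw [e, Nat.factorial_succ, pow_succ, mul_comm ((q + 1) ^ a) (q + 1)]
    exact mul_dvd_mul ⟨a + 1, by ring⟩
      (ih.trans (Nat.factorial_dvd_factorial (by omega)))

lemma pow_dvd_kmB (p a n : ℕ) (hp : 0 < p) (hn : a * p ≤ n) : p ^ a ∣ kmB n := by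
  have h1 : p ^ a ∣ n.factorial :=
    (pow_dvd_fact p a hp).trans (Nat.factorial_dvd_factorial hn)
  exact h1.trans ⟨(6 * n).choose (3 * n) * (3 * n).choose n, by unfold kmB; ring⟩

lemma coeff_dFun {R : Type*} [CommSemiring R] (f : R⟦X⟧) (n : ℕ) :
    coeff n f.derivativeFun = coeff (n + 1) f * (n + 1) := coeff_derivative f n

lemma dFun_C {R : Type*} [CommSemiring R] (r : R) : (C r : R⟦X⟧).derivativeFun = 0 :=
  derivative_C

noncomputable def kmW : ℚ⟦X⟧ := PowerSeries.mk kmw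

lemma dsub (f g : ℚ⟦X⟧) : (f - g).derivativeFun = f.derivativeFun - g.derivativeFun := by
  ext n
  simp only [coeff_dFun, map_sub, sub_mul]

lemma coeff_X2_mul (g : ℚ⟦X⟧) (k : ℕ) : (coeff (k + 2)) (X ^ 2 * g) = coeff k g := by
  simpa using coeff_X_pow_mul g 2 k

lemma C5 : (5 : ℚ⟦X⟧) = C (5 : ℚ) := (map_ofNat (C) 5).symm
lemma C6 : (6 : ℚ⟦X⟧) = C (6 : ℚ) := (map_ofNat (C) 6).symm
lemma C36 : (36 : ℚ⟦X⟧) = C (36 : ℚ) := (map_ofNat (C) 36).symm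
lemma C72 : (72 : ℚ⟦X⟧) = C (72 : ℚ) := (map_ofNat (C) 72).symm

/-- The hypergeometric ODE satisfied by kmW. -/
lemma kmW_ODE : 36 * (X ^ 2 * kmW.derivativeFun.derivativeFun) + 72 * (X * kmW.derivativeFun)
    + 5 * kmW = 6 * kmW.derivativeFun := by
  ext n
  rw [C36, C72, C5, C6]
  simp only [map_add, coeff_C_mul]
  match n with
  | 0 =>
    rw [show (X : ℚ⟦X⟧) ^ 2 * kmW.derivativeFun.derivativeFun
        = X * (X * kmW.derivativeFun.derivativeFun) by ring]
    rw [coeff_zero_X_mul, coeff_zero_X_mul]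
    simp only [coeff_dFun, kmW, coeff_mk, kmw]
    norm_num
  | 1 =>
    rw [show (X : ℚ⟦X⟧) ^ 2 * kmW.derivativeFun.derivativeFun
        = X * (X * kmW.derivativeFun.derivativeFun) by ring]
    rw [coeff_succ_X_mul, coeff_zero_X_mul, coeff_succ_X_mul]
    simp only [coeff_dFun, kmW, coeff_mk, kmw]
    norm_num
  | (k+2) =>
    rw [coeff_X2_mul, coeff_succ_X_mul]
    simp only [coeff_dFun, kmW, coeff_mk]
    have h1 := kmw_rec (k + 2)
    push_cast at h1 ⊢
    rw [show k + 1 + 1 = k + 2 from rfl, show k + 2 + 1 = k + 3 from rfl] at h1 ⊢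
    linear_combination -h1

noncomputable def FQ (f : ℕ → ℤ) : ℚ⟦X⟧ := PowerSeries.mk fun n => (f n : ℚ)

lemma map_deriv (g : PowerSeries ℤ) :
    (PowerSeries.map (Int.castRingHom ℚ) g).derivativeFun
      = PowerSeries.map (Int.castRingHom ℚ) g.derivativeFun := by
  ext n
  simp [coeff_dFun, coeff_map]

lemma RicQ (f : ℕ → ℤ)
    (hf : (1 - 4 * X) * PowerSeries.mk f - 6 * X ^ 2 * (PowerSeries.mk f).derivativeFun -
      X * (PowerSeries.mk f) ^ 2 - 1 = 0) :
    (1 - 4 * X) * FQ f - 6 * X ^ 2 * (FQ f).derivativeFun - X * (FQ f) ^ 2 - 1 = 0 := by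
  have hmap : PowerSeries.map (Int.castRingHom ℚ) (PowerSeries.mk f) = FQ f := by
    ext n; simp [coeff_map, FQ]
  have h := congrArg (PowerSeries.map (Int.castRingHom ℚ)) hf
  simpa [map_sub, map_mul, map_pow, map_one, PowerSeries.map_X, map_ofNat,
    ← map_deriv, hmap] using h

noncomputable def kmV (f : ℕ → ℤ) : ℚ⟦X⟧ :=
  FQ f * kmW - kmW - 6 * (X * kmW.derivativeFun)

lemma X_derivativeFun : (X : ℚ⟦X⟧).derivativeFun = 1 := derivative_X (R := ℚ)

lemma num_mul_derivativeFun (g : ℚ⟦X⟧) : ((6 : ℚ⟦X⟧) * g).derivativeFun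
    = 6 * g.derivativeFun := by
  rw [derivativeFun_mul]
  rw [C6, dFun_C]
  simp [smul_eq_mul]

lemma kmV_ODE (f : ℕ → ℤ)
    (hf : (1 - 4 * X) * PowerSeries.mk f - 6 * X ^ 2 * (PowerSeries.mk f).derivativeFun -
      X * (PowerSeries.mk f) ^ 2 - 1 = 0) :
    X ^ 2 * (kmV f).derivativeFun * 6
      = kmV f - X * (5 * kmV f + FQ f * kmV f) := by
  have hdV : (kmV f).derivativeFun = (FQ f).derivativeFun * kmW + FQ f * kmW.derivativeFun
      - kmW.derivativeFun
      - 6 * (kmW.derivativeFun + X * kmW.derivativeFun.derivativeFun) := by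
    unfold kmV
    rw [dsub, dsub, num_mul_derivativeFun, derivativeFun_mul, derivativeFun_mul,
      X_derivativeFun]
    simp only [smul_eq_mul]
    ring
  simp only [kmV] at *
  rw [hdV]
  linear_combination (-kmW) * (RicQ f hf) - X * kmW_ODE

lemma kmV_zero (f : ℕ → ℤ)
    (hf : (1 - 4 * X) * PowerSeries.mk f - 6 * X ^ 2 * (PowerSeries.mk f).derivativeFun -
      X * (PowerSeries.mk f) ^ 2 - 1 = 0) :
    kmV f = 0 := by
  have hODE := kmV_ODE f hf
  ext n
  rw [map_zero]
  induction n using Nat.strong_induction_on with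
  | _ n ih =>
    have h := congrArg (coeff n) hODE
    match n with
    | 0 =>
      rw [show X ^ 2 * (kmV f).derivativeFun * 6
          = X * (X * ((kmV f).derivativeFun * 6)) by ring] at h
      rw [coeff_zero_X_mul, map_sub, coeff_zero_X_mul, sub_zero] at h
      exact h.symm
    | (m+1) =>
      have hL : coeff (m+1) (X ^ 2 * (kmV f).derivativeFun * 6) = 0 := by
        match m with
        | 0 =>
          rw [show X ^ 2 * (kmV f).derivativeFun * 6
              = X * (X * ((kmV f).derivativeFun * 6)) by ring,
            coeff_succ_X_mul, coeff_zero_X_mul]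
        | (k+1) =>
          rw [show X ^ 2 * (kmV f).derivativeFun * 6
              = X ^ 2 * ((kmV f).derivativeFun * 6) by ring,
            coeff_X2_mul, C6, coeff_mul_C, coeff_dFun,
            ih (k+1) (by omega)]
          ring
      rw [hL, map_sub, coeff_succ_X_mul, map_add, C5, coeff_C_mul,
        ih m (by omega), coeff_mul] at h
      have hsum : ∑ ij ∈ Finset.HasAntidiagonal.antidiagonal m, coeff ij.1 (FQ f) * coeff ij.2 (kmV f)
          = 0 := by
        apply Finset.sum_eq_zero
        intro ij hij
        have h2 : ij.2 ≤ m := by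
          have := Finset.HasAntidiagonal.mem_antidiagonal.mp hij
          omega
        rw [ih ij.2 (by omega), mul_zero]
      rw [hsum] at h
      have := h.symm
      linarith [this]

lemma km_key (f : ℕ → ℤ)
    (hf : (1 - 4 * X) * PowerSeries.mk f - 6 * X ^ 2 * (PowerSeries.mk f).derivativeFun -
      X * (PowerSeries.mk f) ^ 2 - 1 = 0) (n : ℕ) :
    ∑ ij ∈ Finset.HasAntidiagonal.antidiagonal n, (f ij.1 : ℚ) * kmw ij.2 = (6 * n + 1) * kmw n := by
  have h := congrArg (coeff n) (kmV_zero f hf)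
  rw [map_zero] at h
  unfold kmV at h
  rw [map_sub, map_sub, coeff_mul] at h
  have hmk : ∀ ij : ℕ × ℕ, coeff ij.1 (FQ f) * coeff ij.2 kmW
      = (f ij.1 : ℚ) * kmw ij.2 := by
    intro ij; simp [FQ, kmW]
  simp only [hmk] at h
  have hWn : coeff n kmW = kmw n := by simp [kmW]
  match n with
  | 0 =>
    rw [show (6:ℚ⟦X⟧) * (X * kmW.derivativeFun) = X * (kmW.derivativeFun * 6) by ring,
      coeff_zero_X_mul, hWn] at h
    push_cast
    linarith [h]
  | (m+1) =>
    rw [show (6:ℚ⟦X⟧) * (X * kmW.derivativeFun) = X * (kmW.derivativeFun * 6) by ring,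
      coeff_succ_X_mul, C6, coeff_mul_C, coeff_dFun, hWn] at h
    push_cast at h ⊢
    linarith [h]

lemma kmB_zero : kmB 0 = 1 := by simp [kmB]

lemma antidiag_swap {M : Type*} [AddCommMonoid M] (g : ℕ → ℕ → M) (n : ℕ) :
    ∑ ij ∈ Finset.HasAntidiagonal.antidiagonal n, g ij.1 ij.2
      = ∑ ij ∈ Finset.HasAntidiagonal.antidiagonal n, g ij.2 ij.1 := by
  conv_lhs => rw [← Finset.HasAntidiagonal.map_swap_antidiagonal]
  rw [Finset.sum_map]
  apply Finset.sum_congr rfl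
  intro ij _
  rfl

lemma km_key_int (f : ℕ → ℤ)
    (hf : (1 - 4 * X) * PowerSeries.mk f - 6 * X ^ 2 * (PowerSeries.mk f).derivativeFun -
      X * (PowerSeries.mk f) ^ 2 - 1 = 0) (n : ℕ) :
    ∑ ij ∈ Finset.HasAntidiagonal.antidiagonal n, f ij.1 * (kmB ij.2 : ℤ) * 72 ^ ij.1
      = (6 * n + 1) * (kmB n : ℤ) := by
  have h := km_key f hf n
  have h2 : ∑ ij ∈ Finset.HasAntidiagonal.antidiagonal n, (f ij.1 : ℚ) * kmw ij.2 * 72 ^ n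
      = (6 * n + 1) * kmw n * 72 ^ n := by
    rw [← Finset.sum_mul, h]
  have h3 : ∑ ij ∈ Finset.HasAntidiagonal.antidiagonal n, (f ij.1 : ℚ) * (kmB ij.2 : ℚ) * 72 ^ ij.1
      = (6 * n + 1) * (kmB n : ℚ) := by
    rw [kmB_cast]
    rw [show ((6:ℚ) * n + 1) * (kmw n * 72 ^ n) = (6 * n + 1) * kmw n * 72 ^ n by ring, ← h2]
    apply Finset.sum_congr rfl
    intro ij hij
    have hij' : ij.1 + ij.2 = n := Finset.HasAntidiagonal.mem_antidiagonal.mp hij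
    rw [kmB_cast, ← hij', pow_add]
    ring
  exact_mod_cast h3


lemma km_final (f : ℕ → ℤ) (M D : ℕ) (Wb : ℕ → ZMod M)
    (hrec : ∀ n, D ≤ n → (f n : ZMod M) = -∑ j ∈ Finset.Ico 1 D, Wb j * (f (n - j) : ZMod M))
    (S : ℕ → (Fin D → ZMod M)) (hSdef : ∀ m j, S m j = (f (D + m + j) : ZMod M))
    (a b : ℕ) (hlt : a < b) (hS : S a = S b) :
    ∃ N T : ℕ, 1 ≤ T ∧ ∀ lam : ℕ, N ≤ lam → (f (lam + T) : ZMod M) = (f lam : ZMod M) := by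
  refine ⟨D + a, b - a, by omega, ?_⟩
  have claim : ∀ k, (f (D + a + k + (b - a)) : ZMod M) = (f (D + a + k) : ZMod M) := by
    intro k
    induction k using Nat.strong_induction_on with
    | _ k ih =>
      by_cases hk : k < D
      · have h := congrFun hS ⟨k, hk⟩
        rw [hSdef, hSdef] at h
        rw [show D + a + k + (b - a) = D + b + k by omega]
        exact h.symm
      · push_neg at hk
        have h1 := hrec (D + a + k) (by omega)
        have h2 := hrec (D + a + k + (b - a)) (by omega)
        rw [h1, h2]
        congr 1
        apply Finset.sum_congr rfl
        intro j hj
        have hj' : 1 ≤ j ∧ j < D := by simpa [Finset.mem_Ico] using hj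
        have e1 : D + a + k + (b - a) - j = D + a + (k - j) + (b - a) := by omega
        have e2 : D + a + k - j = D + a + (k - j) := by omega
        rw [e1, e2, ih (k - j) (by omega)]
  intro lam hlam
  have h := claim (lam - (D + a))
  rw [show D + a + (lam - (D + a)) + (b - a) = lam + (b - a) by omega,
    show D + a + (lam - (D + a)) = lam by omega] at h
  exact h

/-- for every prime p ≥ 5, the sequence (f_λ) of free subgroup
numbers of PSL₂(ℤ) — i.e. the coefficient sequence of the unique power series
solution with f₀ = 1 of (1−4z)F − 6z²F′ − zF² − 1 = 0 — is ultimately periodic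
modulo p^α for every α ≥ 1. -/
theorem statement11 (f : ℕ → ℤ) (hf0 : f 0 = 1)
    (hf : (1 - 4 * X) * PowerSeries.mk f - 6 * X ^ 2 * (PowerSeries.mk f).derivativeFun -
      X * (PowerSeries.mk f) ^ 2 - 1 = 0)
    (p : ℕ) (hp : p.Prime) (hp5 : 5 ≤ p) (α : ℕ) (hα : 1 ≤ α) :
    ∃ N T : ℕ, 1 ≤ T ∧ ∀ lam : ℕ, N ≤ lam → f (lam + T) ≡ f lam [ZMOD (p ^ α : ℕ)] := by
  set M := p ^ α with hM
  haveI : NeZero M := ⟨pow_ne_zero α (by omega)⟩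
  -- 72 is invertible in ZMod M
  have hpdvd : ¬ p ∣ 72 := by
    intro h
    rcases (Nat.Prime.dvd_mul hp).mp (show p ∣ 8 * 9 by norm_num at h ⊢; omega) with h8 | h9
    · have := Nat.le_of_dvd (by norm_num) (hp.dvd_of_dvd_pow (show p ∣ 2 ^ 3 by norm_num [h8]))
      omega
    · have := Nat.le_of_dvd (by norm_num) (hp.dvd_of_dvd_pow (show p ∣ 3 ^ 2 by norm_num [h9]))
      omega
  have hcop : Nat.Coprime 72 M := by
    exact (Nat.Coprime.pow_left α (hp.coprime_iff_not_dvd.mpr hpdvd)).symm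
  have hunit : IsUnit (72 : ZMod M) := by
    have := (ZMod.isUnit_iff_coprime 72 M).mpr hcop
    simpa using this
  obtain ⟨u, hu⟩ := isUnit_iff_exists_inv.mp hunit
  -- the finite-support weight sequence
  set Wb : ℕ → ZMod M := fun j => (kmB j : ZMod M) * u ^ j with hWb
  set D := α * p with hD
  have hD5 : 5 ≤ D := le_trans hp5 (Nat.le_mul_of_pos_left p (show 0 < α by omega))
  have hWb0 : Wb 0 = 1 := by simp [hWb, kmB_zero]
  have hWbD : ∀ j, D ≤ j → Wb j = 0 := by
    intro j hj
    have : (kmB j : ZMod M) = 0 :=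
      (ZMod.natCast_eq_zero_iff _ _).mpr (pow_dvd_kmB p α j (by omega) hj)
    simp [hWb, this]
  -- the key convolution identity in ZMod M
  have keyR : ∀ n : ℕ, ∑ ij ∈ Finset.HasAntidiagonal.antidiagonal n, Wb ij.1 * (f ij.2 : ZMod M)
      = (6 * n + 1) * Wb n := by
    intro n
    have h := km_key_int f hf n
    have hcast : ∑ ij ∈ Finset.HasAntidiagonal.antidiagonal n, (f ij.1 : ZMod M) * (kmB ij.2 : ZMod M) * 72 ^ ij.1
        = (6 * n + 1) * (kmB n : ZMod M) := by
      have := congrArg (fun z : ℤ => (z : ZMod M)) h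
      push_cast at this
      exact this
    have hmul := congrArg (fun z : ZMod M => z * u ^ n) hcast
    simp only [Finset.sum_mul] at hmul
    calc ∑ ij ∈ Finset.HasAntidiagonal.antidiagonal n, Wb ij.1 * (f ij.2 : ZMod M)
        = ∑ ij ∈ Finset.HasAntidiagonal.antidiagonal n, Wb ij.2 * (f ij.1 : ZMod M) :=
          antidiag_swap (fun a b => Wb a * (f b : ZMod M)) n
      _ = ∑ ij ∈ Finset.HasAntidiagonal.antidiagonal n, (f ij.1 : ZMod M) * (kmB ij.2 : ZMod M) * 72 ^ ij.1 * u ^ n := by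
          apply Finset.sum_congr rfl
          intro ij hij
          have hij' : ij.1 + ij.2 = n := Finset.HasAntidiagonal.mem_antidiagonal.mp hij
          rw [hWb, ← hij', pow_add]
          have : (72 : ZMod M) ^ ij.1 * (u ^ ij.1 * u ^ ij.2) = (72 * u) ^ ij.1 * u ^ ij.2 := by
            rw [mul_pow]; ring
          calc (kmB ij.2 : ZMod M) * u ^ ij.2 * (f ij.1 : ZMod M)
              = (f ij.1 : ZMod M) * (kmB ij.2 : ZMod M) * ((72 * u) ^ ij.1 * u ^ ij.2) := by
                rw [hu]; ring
            _ = (f ij.1 : ZMod M) * (kmB ij.2 : ZMod M) * 72 ^ ij.1 * (u ^ ij.1 * u ^ ij.2) := by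
                rw [mul_pow]; ring
      _ = (6 * n + 1) * (kmB n : ZMod M) * u ^ n := hmul
      _ = (6 * n + 1) * Wb n := by rw [hWb]; ring
  -- linear recurrence for n ≥ D
  have hrec : ∀ n, D ≤ n →
      (f n : ZMod M) = -∑ j ∈ Finset.Ico 1 D, Wb j * (f (n - j) : ZMod M) := by
    intro n hn
    have h := keyR n
    rw [Finset.Nat.sum_antidiagonal_eq_sum_range_succ (fun a b => Wb a * (f b : ZMod M))] at h
    rw [hWbD n hn, mul_zero] at h
    have hsub : ∑ k ∈ Finset.range (n + 1), Wb k * (f (n - k) : ZMod M)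
        = ∑ k ∈ Finset.range D, Wb k * (f (n - k) : ZMod M) := by
      symm
      apply Finset.sum_subset
      · exact Finset.range_subset_range.mpr (by omega)
      · intro x hx hnx
        rw [hWbD x (by simp at hnx; omega), zero_mul]
    rw [hsub, Finset.range_eq_Ico, Finset.sum_eq_sum_Ico_succ_bot (by omega)] at h
    rw [hWb0] at h
    simp only [Nat.sub_zero, one_mul, zero_add] at h
    have := eq_neg_of_add_eq_zero_left h
    simpa [hWb] using this
  -- pigeonhole on windows of length D
  let S : ℕ → (Fin D → ZMod M) := fun m j => (f (D + m + j) : ZMod M)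
  have hSdef : ∀ m j, S m j = (f (D + m + (j : Fin D)) : ZMod M) := fun m j => rfl
  obtain ⟨a, b, hab, hS⟩ := Finite.exists_ne_map_eq_of_infinite S
  have hfin : ∃ N T : ℕ, 1 ≤ T ∧ ∀ lam : ℕ, N ≤ lam →
      (f (lam + T) : ZMod M) = (f lam : ZMod M) := by
    rcases Nat.lt_or_ge a b with hlt | hge
    · exact km_final f M D Wb hrec S hSdef a b hlt hS
    · have hlt : b < a := by omega
      exact km_final f M D Wb hrec S hSdef b a hlt hS.symm
  obtain ⟨N, T, hT, hper⟩ := hfin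
  refine ⟨N, T, hT, fun lam hl => ?_⟩
  exact (ZMod.intCast_eq_intCast_iff _ _ _).mp (hper lam hl)
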